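/- If rationals a, b with a ≠ b satisfy a^3 + a^2 b + a b^2 + b^3 = 1, then the rationals x = 2/(a+b) and y = 2(a-b)/(a+b) satisfy y^2 = x^3 - 4 (note a + b ≠ 0 since otherwise the cubic equation fails). -/

import Mathlib

theorem stmt_5 (a b : ℚ) (hab : a ≠ b)
    (h : a^3 + a^2*b + a*b^2 + b^3 = 1) :
    (2*(a-b)/(a+b))^2 = (2/(a+b))^3 - 4 := by
  have hs : a + b ≠ 0 := by
    intro hz
    have hb : b = -a := by linarith
    rw [hb] at h
    norm_num at h
    linarith
  field_simp
  linear_combination 8*h
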